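/- Let Z_n = Σ_{ω ∈ {0,1}^{E_n}} P_{φ_n(F_n(ω))}(ω) with φ_n(x) = exp(−x/n^a) and F_n : {0,1}^{E_n} → {1,…,n^d}. If (ω(b))_{0 ≤ b ≤ n^d} is a coupling in which ω(b) has law P_{φ_n(b)} for each b, then Z_n = P(∃ b ∈ {1,…,n^d} : F_n(ω(b)) = b). In particular, Z_n equals the probability that the function b ↦ F_n(ω(b)) admits a fixed point. -/

import Mathlib

open MeasureTheory

/-- The box `Λ(n) = [-n/2, n/2)^d ∩ ℤ^d`. -/
noncomputable def box (d n : ℕ) : Finset (Fin d → ℤ) :=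
  Fintype.piFinset fun _ => Finset.Icc (-(n : ℤ) / 2) (((n : ℤ) - 1) / 2)

/-- The set `E_n` of nearest-neighbour edges with both endpoints in `Λ(n)`. -/
noncomputable def boxEdges (d n : ℕ) : Finset (Sym2 (Fin d → ℤ)) :=
  (((box d n) ×ˢ (box d n)).filter fun p => (∑ i, |p.1 i - p.2 i|) = 1).image (fun p => Sym2.mk p.1 p.2)

/-- Percolation configurations on the edges of the box. -/
abbrev Cfg (d n : ℕ) := {e // e ∈ boxEdges d n} → Bool

/-- `φ_n(x) = exp(-x/n^a)`. -/
noncomputable def phi (n : ℕ) (a : ℝ) (x : ℝ) : ℝ := Real.exp (-x / (n : ℝ) ^ a)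

/-- The Bernoulli(p) weight `P_p(ω)` of a configuration `ω` on `E_n`. -/
noncomputable def Pcfg (d n : ℕ) (p : ℝ) (ω : Cfg d n) : ℝ :=
  ∏ e : {e // e ∈ boxEdges d n}, (if ω e then p else 1 - p)

lemma Pcfg_nonneg {d n : ℕ} {p : ℝ} (h0 : 0 ≤ p) (h1 : p ≤ 1) (f : Cfg d n) :
    0 ≤ Pcfg d n p f := by
  apply Finset.prod_nonneg
  intro e _
  split <;> linarith

lemma sum_Pcfg (d n : ℕ) (p : ℝ) : ∑ f : Cfg d n, Pcfg d n p f = 1 := by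
  unfold Pcfg
  have := Finset.prod_univ_sum (fun _ : {e // e ∈ boxEdges d n} => (Finset.univ : Finset Bool))
    (fun _ b => if b then p else (1 - p))
  rw [Fintype.piFinset_univ] at this
  rw [← this]
  simp

lemma phi_nonneg (n : ℕ) (a x : ℝ) : 0 ≤ phi n a x := (Real.exp_pos _).le

lemma phi_le_one (n : ℕ) (hn : 1 ≤ n) (a : ℝ) {x : ℝ} (hx : 0 ≤ x) : phi n a x ≤ 1 := by
  rw [phi, Real.exp_le_one_iff]
  apply div_nonpos_of_nonpos_of_nonneg (by linarith)
  positivity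


/-- `Z_n = Σ_ω P_{φ_n(F_n(ω))}(ω)` equals the probability, under a monotone coupling
`(ω(b))_b` with `ω(b) ∼ P_{φ_n(b)}`, that `b ↦ F_n(ω(b))` admits a fixed point
`b ∈ {1, …, n^d}`. -/
theorem Zn_fixed_point (d n : ℕ) (hd : 2 ≤ d) (hn : 1 ≤ n) (a : ℝ) (ha : 0 < a)
    (F : Cfg d n → ℕ) (hF : ∀ ω, 1 ≤ F ω ∧ F ω ≤ n ^ d)
    (hFmono : ∀ ω ω' : Cfg d n, (∀ e, ω e = true → ω' e = true) → F ω ≤ F ω')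
    {Ω : Type*} [MeasurableSpace Ω] (μ : Measure Ω) [IsProbabilityMeasure μ]
    (W : ℕ → Ω → Cfg d n)
    (hlaw : ∀ b ≤ n ^ d, ∀ f : Cfg d n,
      μ {o | W b o = f} = ENNReal.ofReal (Pcfg d n (phi n a b) f))
    (hmono : ∀ o : Ω, ∀ b b' : ℕ, b ≤ b' → ∀ e, W b' o e = true → W b o e = true) :
    ENNReal.ofReal (∑ ω : Cfg d n, Pcfg d n (phi n a (F ω)) ω) =
      μ {o | ∃ b : ℕ, 1 ≤ b ∧ b ≤ n ^ d ∧ F (W b o) = b} := by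
  classical
  set N := n ^ d with hN
  -- basic p bounds
  have hp0 : ∀ b : ℕ, 0 ≤ phi n a b := fun b => phi_nonneg n a b
  have hp1 : ∀ b : ℕ, phi n a b ≤ 1 := fun b => phi_le_one n hn a (Nat.cast_nonneg b)
  have hPnn : ∀ (b : ℕ) (f : Cfg d n), 0 ≤ Pcfg d n (phi n a b) f :=
    fun b f => Pcfg_nonneg (hp0 b) (hp1 b) f
  -- the fiber sets
  set A : ℕ → Set Ω := fun b => {o | F (W b o) = b} with hA
  set m : ℕ → ENNReal := fun b =>
    ∑ f ∈ Finset.univ.filter (fun f : Cfg d n => F f = b),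
      ENNReal.ofReal (Pcfg d n (phi n a b) f) with hm
  -- total mass one
  have htot : ∀ b : ℕ, ∑ f : Cfg d n, ENNReal.ofReal (Pcfg d n (phi n a b) f) = 1 := by
    intro b
    rw [← ENNReal.ofReal_sum_of_nonneg (fun f _ => hPnn b f), sum_Pcfg, ENNReal.ofReal_one]
  have hsplit : ∀ b : ℕ, m b +
      (∑ f ∈ Finset.univ.filter (fun f : Cfg d n => ¬ F f = b),
        ENNReal.ofReal (Pcfg d n (phi n a b) f)) = 1 := by
    intro b
    rw [hm]
    rw [Finset.sum_filter_add_sum_filter_not]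
    exact htot b
  have hm_le : ∀ b : ℕ, m b ≤ 1 := fun b => le_of_le_of_eq le_self_add (hsplit b)
  have hm_ne : ∀ b : ℕ, m b ≠ ⊤ := fun b => ne_top_of_le_ne_top ENNReal.one_ne_top (hm_le b)
  -- A b measure bounds
  have hA_sub : ∀ b : ℕ, A b ⊆ ⋃ f ∈ Finset.univ.filter (fun f : Cfg d n => F f = b),
      {o | W b o = f} := by
    intro b o ho
    simp only [Set.mem_iUnion]
    exact ⟨W b o, Finset.mem_filter.mpr ⟨Finset.mem_univ _, ho⟩, rfl⟩
  have hAc_sub : ∀ b : ℕ, (A b)ᶜ ⊆ ⋃ f ∈ Finset.univ.filter (fun f : Cfg d n => ¬ F f = b),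
      {o | W b o = f} := by
    intro b o ho
    simp only [Set.mem_iUnion]
    exact ⟨W b o, Finset.mem_filter.mpr ⟨Finset.mem_univ _, ho⟩, rfl⟩
  have hA_ub : ∀ b ≤ N, μ (A b) ≤ m b := by
    intro b hb
    calc μ (A b) ≤ μ (⋃ f ∈ Finset.univ.filter (fun f : Cfg d n => F f = b), {o | W b o = f}) :=
          measure_mono (hA_sub b)
      _ ≤ ∑ f ∈ Finset.univ.filter (fun f : Cfg d n => F f = b), μ {o | W b o = f} :=
          measure_biUnion_finset_le _ _
      _ = m b := by
          rw [hm]; exact Finset.sum_congr rfl fun f _ => hlaw b hb f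
  have hAc_ub : ∀ b ≤ N, μ ((A b)ᶜ) ≤
      ∑ f ∈ Finset.univ.filter (fun f : Cfg d n => ¬ F f = b),
        ENNReal.ofReal (Pcfg d n (phi n a b) f) := by
    intro b hb
    calc μ ((A b)ᶜ)
        ≤ μ (⋃ f ∈ Finset.univ.filter (fun f : Cfg d n => ¬ F f = b), {o | W b o = f}) :=
          measure_mono (hAc_sub b)
      _ ≤ ∑ f ∈ Finset.univ.filter (fun f : Cfg d n => ¬ F f = b), μ {o | W b o = f} :=
          measure_biUnion_finset_le _ _
      _ = _ := Finset.sum_congr rfl fun f _ => hlaw b hb f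
  have hsum_ne : ∀ b : ℕ, (∑ f ∈ Finset.univ.filter (fun f : Cfg d n => ¬ F f = b),
      ENNReal.ofReal (Pcfg d n (phi n a b) f)) ≠ ⊤ := by
    intro b
    exact ne_top_of_le_ne_top ENNReal.one_ne_top (le_of_le_of_eq le_add_self (hsplit b))
  have hA_lb : ∀ b ≤ N, m b ≤ μ (A b) := by
    intro b hb
    have h1 : (1 : ENNReal) ≤ μ (A b) + μ ((A b)ᶜ) := by
      have := measure_union_le (μ := μ) (A b) ((A b)ᶜ)
      rw [Set.union_compl_self] at this
      simpa using this
    have h2 : m b + (∑ f ∈ Finset.univ.filter (fun f : Cfg d n => ¬ F f = b),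
        ENNReal.ofReal (Pcfg d n (phi n a b) f)) ≤ μ (A b) +
        (∑ f ∈ Finset.univ.filter (fun f : Cfg d n => ¬ F f = b),
        ENNReal.ofReal (Pcfg d n (phi n a b) f)) := by
      rw [hsplit b]
      exact h1.trans (add_le_add le_rfl (hAc_ub b hb))
    exact (ENNReal.add_le_add_iff_right (hsum_ne b)).mp h2
  have hA_eq : ∀ b ≤ N, μ (A b) = m b := fun b hb => le_antisymm (hA_ub b hb) (hA_lb b hb)
  -- null measurability
  have hnull : ∀ b ≤ N, NullMeasurableSet (A b) μ := by
    intro b hb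
    set t := toMeasurable μ (A b)
    set u := toMeasurable μ ((A b)ᶜ)
    have hst : A b ⊆ t := subset_toMeasurable _ _
    have hsu : (A b)ᶜ ⊆ u := subset_toMeasurable _ _
    have htu : t ∪ u = Set.univ := by
      apply Set.eq_univ_of_forall
      intro x
      by_cases hx : x ∈ A b
      · exact Or.inl (hst hx)
      · exact Or.inr (hsu hx)
    have hsum : μ t + μ u ≤ 1 := by
      rw [measure_toMeasurable, measure_toMeasurable, hA_eq b hb]
      calc m b + μ ((A b)ᶜ) ≤ m b + (∑ f ∈ Finset.univ.filter (fun f : Cfg d n => ¬ F f = b),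
            ENNReal.ofReal (Pcfg d n (phi n a b) f)) := add_le_add le_rfl (hAc_ub b hb)
        _ = 1 := hsplit b
    have hinter : μ (t ∩ u) = 0 := by
      have := measure_union_add_inter (μ := μ) t (measurableSet_toMeasurable μ ((A b)ᶜ))
      rw [htu] at this
      have h1 : (1 : ENNReal) + μ (t ∩ u) ≤ 1 + 0 := by
        rw [add_zero]
        calc (1 : ENNReal) + μ (t ∩ u) = μ (Set.univ) + μ (t ∩ u) := by simp
          _ = μ t + μ u := this
          _ ≤ 1 := hsum
      have := (ENNReal.add_le_add_iff_left ENNReal.one_ne_top).mp h1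
      exact le_antisymm this zero_le
    refine ⟨t, measurableSet_toMeasurable μ _, ?_⟩
    rw [MeasureTheory.ae_eq_set]
    constructor
    · rw [Set.diff_eq_empty.mpr hst]; exact measure_empty
    · apply measure_mono_null (fun x hx => ?_) hinter
      exact ⟨hx.1, hsu hx.2⟩
  -- disjointness
  have hdisj : Set.Pairwise (↑(Finset.Icc 1 N)) (Function.onFun Disjoint A) := by
    intro b hb b' hb' hne
    rw [Function.onFun, Set.disjoint_left]
    intro o ho ho'
    rcases lt_or_gt_of_ne hne with h | h
    · have := hFmono _ _ (hmono o b b' h.le)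
      rw [ho, ho'] at this  -- F (W b' o) ≤ F (W b o) : b' ≤ b
      omega
    · have := hFmono _ _ (hmono o b' b h.le)
      rw [ho, ho'] at this
      omega
  -- event decomposition
  have hev : {o : Ω | ∃ b : ℕ, 1 ≤ b ∧ b ≤ N ∧ F (W b o) = b} = ⋃ b ∈ Finset.Icc 1 N, A b := by
    ext o
    simp only [Set.mem_setOf_eq, Set.mem_iUnion, Finset.mem_Icc, hA, exists_prop]
    constructor
    · rintro ⟨b, h1, h2, h3⟩; exact ⟨b, ⟨h1, h2⟩, h3⟩
    · rintro ⟨b, ⟨h1, h2⟩, h3⟩; exact ⟨b, h1, h2, h3⟩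
  rw [hev, measure_biUnion_finset₀ (fun b hb b' hb' hne => (hdisj hb hb' hne).aedisjoint)
    (fun b hb => hnull b (Finset.mem_Icc.mp hb).2)]
  have : ∀ b ∈ Finset.Icc 1 N, μ (A b) = m b :=
    fun b hb => hA_eq b (Finset.mem_Icc.mp hb).2
  rw [Finset.sum_congr rfl this]
  -- final sum identity
  rw [ENNReal.ofReal_sum_of_nonneg (fun f _ => Pcfg_nonneg (hp0 (F f))
    (phi_le_one n hn a (Nat.cast_nonneg _)) f)]
  rw [hm]
  rw [← Finset.sum_fiberwise_of_maps_to (g := F) (t := Finset.Icc 1 N)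
    (fun f _ => Finset.mem_Icc.mpr ⟨(hF f).1, (hF f).2⟩)]
  apply Finset.sum_congr rfl
  intro b _
  apply Finset.sum_congr rfl
  intro f hf
  rw [(Finset.mem_filter.mp hf).2]
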